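/- The online algorithm that, upon arrival of an unhit α-fat object O, adds all integer points of level ℓ(O) in O to its hitting set, maintains a valid hitting set and adds at most (4α+1)^d points per round. -/

import Mathlib

noncomputable section

/-- Closed axis-parallel `d`-cube with lower corner `a` and side length `w`. -/
def Cube {d : ℕ} (a : Fin d → ℝ) (w : ℝ) : Set (Fin d → ℝ) :=
  {x | ∀ i, a i ≤ x i ∧ x i ≤ a i + w}

/-- Open axis-parallel `d`-cube with lower corner `a` and side length `w`. -/
def OpenCube {d : ℕ} (a : Fin d → ℝ) (w : ℝ) : Set (Fin d → ℝ) :=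
  {x | ∀ i, a i < x i ∧ x i < a i + w}

/-- The open box `(0,N)^d`. -/
def Box (d N : ℕ) : Set (Fin d → ℝ) :=
  {x | ∀ i, 0 < x i ∧ x i < N}

/-- The level of an integer point: minimum 2-adic valuation of its coordinates. -/
def level {d : ℕ} (q : Fin d → ℤ) : ℕ := ⨅ i, padicValInt 2 (q i)

/-- Embedding of integer points into `ℝ^d`. -/
def toRealPt {d : ℕ} (q : Fin d → ℤ) : Fin d → ℝ := fun i => (q i : ℝ)

/-- `w` is the out-width of `O`: side of the smallest enclosing axis-parallel cube. -/
def IsOutWidth {d : ℕ} (O : Set (Fin d → ℝ)) (w : ℝ) : Prop :=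
  (∃ a, O ⊆ Cube a w) ∧ ∀ w' a, O ⊆ Cube a w' → w ≤ w'

/-- `w` is the in-width of `O`: side of the largest inscribed axis-parallel cube. -/
def IsInWidth {d : ℕ} (O : Set (Fin d → ℝ)) (w : ℝ) : Prop :=
  (∃ a, Cube a w ⊆ O) ∧ ∀ w' a, Cube a w' ⊆ O → w' ≤ w

/-- `O` is `α`-fat: out-width at most `α` times in-width. -/
def IsFat {d : ℕ} (α : ℝ) (O : Set (Fin d → ℝ)) : Prop :=
  ∃ wo wi, IsOutWidth O wo ∧ IsInWidth O wi ∧ wo ≤ α * wi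

/-- Level of an object: maximum level of integer points inside it. -/
def objLevel {d : ℕ} (O : Set (Fin d → ℝ)) : ℕ :=
  sSup {l | ∃ q : Fin d → ℤ, toRealPt q ∈ O ∧ level q = l}

/-- Integer points of level exactly `l` inside `O`. -/
def lvlPts {d : ℕ} (l : ℕ) (O : Set (Fin d → ℝ)) : Set (Fin d → ℤ) :=
  {q | toRealPt q ∈ O ∧ level q = l}

/-- `H` hits `O`. -/
def hits {d : ℕ} (H : Set (Fin d → ℤ)) (O : Set (Fin d → ℝ)) : Prop :=
  ∃ q ∈ H, toRealPt q ∈ O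

/-- The hitting set maintained by the level-picking algorithm after `n` rounds. -/
def algoH {d : ℕ} (O : ℕ → Set (Fin d → ℝ)) : ℕ → Set (Fin d → ℤ)
  | 0 => ∅
  | n + 1 =>
      algoH O n ∪
        {q | ¬ hits (algoH O n) (O n) ∧ q ∈ lvlPts (objLevel (O n)) (O n)}

/-- Levels of integer points in the box are bounded by `N`. -/
lemma level_le_of_mem_box {d N : ℕ} {q : Fin d → ℤ} (hq : toRealPt q ∈ Box d N) :
    level q ≤ N := by
  rcases Nat.eq_zero_or_pos d with hd | hd
  · subst hd
    have : level q = 0 := by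
      rw [level, iInf_of_isEmpty]; exact Nat.sInf_empty
    omega
  · set i0 : Fin d := ⟨0, hd⟩
    have h1 : level q ≤ padicValInt 2 (q i0) := ciInf_le (OrderBot.bddBelow _) i0
    set v := padicValInt 2 (q i0) with hv
    have h0 : (0 : ℝ) < (q i0 : ℝ) := (hq i0).1
    have hpos : 0 < q i0 := by exact_mod_cast h0
    have hlt : (q i0 : ℝ) < N := (hq i0).2
    have hltN : q i0 < (N : ℤ) := by exact_mod_cast hlt
    have hdvd : (2 : ℤ) ^ v ∣ q i0 := by
      have := padicValInt_dvd (p := 2) (q i0)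
      simpa using this
    have h2 : (2 : ℤ) ^ v ≤ q i0 := Int.le_of_dvd hpos hdvd
    have h3 : (v : ℤ) < 2 ^ v := by exact_mod_cast (Nat.lt_two_pow_self : v < 2 ^ v)
    have : (v : ℤ) < (N : ℤ) := lt_of_lt_of_le h3 (h2.trans hltN.le)
    have : v < N := by exact_mod_cast this
    omega

lemma bddAbove_levels {d N : ℕ} {S : Set (Fin d → ℝ)} (hS : S ⊆ Box d N) :
    BddAbove {l | ∃ q : Fin d → ℤ, toRealPt q ∈ S ∧ level q = l} := by
  refine ⟨N, ?_⟩
  rintro l ⟨q, hq, rfl⟩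
  exact level_le_of_mem_box (hS hq)

/-- The supremum level is attained. -/
lemma objLevel_attained {d N : ℕ} {S : Set (Fin d → ℝ)} (hS : S ⊆ Box d N)
    (hne : ∃ q : Fin d → ℤ, toRealPt q ∈ S) :
    ∃ q : Fin d → ℤ, toRealPt q ∈ S ∧ level q = objLevel S := by
  obtain ⟨q, hq⟩ := hne
  have hmem : level q ∈ {l | ∃ q : Fin d → ℤ, toRealPt q ∈ S ∧ level q = l} := ⟨q, hq, rfl⟩
  exact Nat.sSup_mem ⟨level q, hmem⟩ (bddAbove_levels hS)

lemma level_le_objLevel {d N : ℕ} {S : Set (Fin d → ℝ)} (hS : S ⊆ Box d N)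
    {q : Fin d → ℤ} (hq : toRealPt q ∈ S) : level q ≤ objLevel S :=
  le_csSup (bddAbove_levels hS) ⟨q, hq, rfl⟩

/-- Key counting lemma: the set of maximal-level integer points of a fat object is
finite and of size at most `(4α+1)^d`. -/
lemma lvlPts_finite_and_card {d N : ℕ} {α : ℝ} (hα : 1 ≤ α) {S : Set (Fin d → ℝ)}
    (hS : S ⊆ Box d N) (hfat : IsFat α S) (hne : ∃ q : Fin d → ℤ, toRealPt q ∈ S) :
    (lvlPts (objLevel S) S).Finite ∧
      ((lvlPts (objLevel S) S).ncard : ℝ) ≤ (4 * α + 1) ^ d := by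
  rcases Nat.eq_zero_or_pos d with hd | hd
  · subst hd
    have hfin : (lvlPts (objLevel S) S).Finite := Set.toFinite _
    refine ⟨hfin, ?_⟩
    have h1 : (lvlPts (objLevel S) S).ncard ≤ 1 := by
      have h2 : (lvlPts (objLevel S) S).ncard ≤ (Set.univ : Set (Fin 0 → ℤ)).ncard :=
        Set.ncard_le_ncard (Set.subset_univ _) Set.finite_univ
      rwa [Set.ncard_univ, Nat.card_unique] at h2
    calc ((lvlPts (objLevel S) S).ncard : ℝ) ≤ 1 := by exact_mod_cast h1
      _ = (4 * α + 1) ^ 0 := by norm_num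
  · haveI : Nonempty (Fin d) := ⟨⟨0, hd⟩⟩
    obtain ⟨wo, wi, hout, hin, hfatle⟩ := hfat
    obtain ⟨a, ha⟩ := hout.1
    set ℓ := objLevel S with hℓ
    have hαpos : (0 : ℝ) < α := lt_of_lt_of_le one_pos hα
    -- wi < 2^(ℓ+1)
    have hwi : wi < 2 ^ (ℓ + 1) := by
      by_contra hcon
      push_neg at hcon
      obtain ⟨a', ha'⟩ := hin.1
      set c : ℝ := 2 ^ (ℓ + 1) with hc
      have hcpos : (0 : ℝ) < c := by positivity
      set q : Fin d → ℤ := fun i => 2 ^ (ℓ + 1) * ⌈a' i / c⌉ with hqdef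
      have hval : ∀ i, (toRealPt q) i = c * (⌈a' i / c⌉ : ℝ) := by
        intro i
        show ((2 ^ (ℓ + 1) * ⌈a' i / c⌉ : ℤ) : ℝ) = c * (⌈a' i / c⌉ : ℝ)
        rw [hc]; push_cast; ring
      have hqcube : toRealPt q ∈ Cube a' wi := by
        intro i
        have h1 : a' i / c ≤ (⌈a' i / c⌉ : ℝ) := Int.le_ceil _
        have h2 : (⌈a' i / c⌉ : ℝ) < a' i / c + 1 := Int.ceil_lt_add_one _
        rw [hval i]
        constructor
        · have := mul_le_mul_of_nonneg_left h1 hcpos.le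
          calc a' i = c * (a' i / c) := by field_simp
            _ ≤ c * (⌈a' i / c⌉ : ℝ) := this
        · refine le_of_lt ?_
          have := mul_lt_mul_of_pos_left h2 hcpos
          calc c * (⌈a' i / c⌉ : ℝ) < c * (a' i / c + 1) := this
            _ = a' i + c := by field_simp
            _ ≤ a' i + wi := by linarith
      have hqS : toRealPt q ∈ S := ha' hqcube
      have hqbox := hS hqS
      have hlev : ℓ + 1 ≤ level q := by
        apply le_ciInf
        intro i
        have h0 : (0 : ℝ) < (q i : ℝ) := (hqbox i).1
        have hpos : 0 < q i := by exact_mod_cast h0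
        have hdvd : (2 : ℤ) ^ (ℓ + 1) ∣ q i := ⟨⌈a' i / c⌉, rfl⟩
        have := (padicValInt_dvd_iff (p := 2) (ℓ + 1) (q i)).mp (by exact_mod_cast hdvd)
        rcases this with h | h
        · omega
        · exact h
      have := level_le_objLevel hS hqS
      omega
    have hwi0 : 0 ≤ wi := by
      obtain ⟨q0, hq0⟩ := hne
      have hsub : Cube (toRealPt q0) 0 ⊆ S := by
        intro x hx
        have : x = toRealPt q0 := by
          funext i
          have := hx i
          have h1 := this.1
          have h2 := this.2
          simp at h2
          linarith
        rw [this]; exact hq0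
      exact hin.2 0 _ hsub
    have hwo : wo < 2 * α * 2 ^ ℓ := by
      have : α * wi < α * 2 ^ (ℓ + 1) := by
        apply mul_lt_mul_of_pos_left hwi hαpos
      calc wo ≤ α * wi := hfatle
        _ < α * 2 ^ (ℓ + 1) := this
        _ = 2 * α * 2 ^ ℓ := by ring
    -- counting
    set K : ℤ := ⌈2 * α⌉ with hK
    have hKpos : (0 : ℤ) < K := by
      rw [hK, Int.lt_ceil]
      push_cast; linarith
    have hKle : (K : ℝ) ≤ 4 * α + 1 := by
      have := Int.ceil_lt_add_one (2 * α)
      rw [hK]; push_cast at this ⊢; linarith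
    set cR : ℝ := 2 ^ ℓ with hcR
    have hcpos : (0 : ℝ) < cR := by positivity
    set cZ : ℤ := 2 ^ ℓ with hcZ
    set cv : Fin d → ℤ := fun i => ⌈a i / cR⌉ with hcv
    set T : Set (Fin d → ℤ) :=
      ↑(Fintype.piFinset fun _ : Fin d => Finset.Icc (0 : ℤ) (K - 1)) with hT
    set F : (Fin d → ℤ) → (Fin d → ℤ) := fun t i => cZ * (cv i + t i) with hF
    have hsub : lvlPts ℓ S ⊆ F '' T := by
      rintro q ⟨hqS, hqlev⟩
      have hqbox := hS hqS
      have hqcube := ha hqS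
      have hdvd : ∀ i, cZ ∣ q i := by
        intro i
        have h1 : ℓ ≤ padicValInt 2 (q i) := by
          rw [← hqlev]
          exact ciInf_le (OrderBot.bddBelow _) i
        have h2 := (padicValInt_dvd_iff (p := 2) ℓ (q i)).mpr (Or.inr h1)
        rw [hcZ]
        exact_mod_cast h2
      refine ⟨fun i => q i / cZ - cv i, ?_, ?_⟩
      · rw [hT]
        rw [Finset.mem_coe, Fintype.mem_piFinset]
        intro i
        rw [Finset.mem_Icc]
        have hq1 : a i ≤ (q i : ℝ) := (hqcube i).1
        have hq2 : (q i : ℝ) ≤ a i + wo := (hqcube i).2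
        have heqZ : cZ * (q i / cZ) = q i := Int.mul_ediv_cancel' (hdvd i)
        have heq : (cZ : ℝ) * ((q i / cZ : ℤ) : ℝ) = (q i : ℝ) := by exact_mod_cast heqZ
        have hcZR : (cZ : ℝ) = cR := by rw [hcZ, hcR]; push_cast; ring
        have hmR : ((q i / cZ : ℤ) : ℝ) = (q i : ℝ) / cR := by
          rw [eq_div_iff hcpos.ne', ← hcZR]
          linear_combination heq
        constructor
        · have h1 : a i / cR ≤ ((q i / cZ : ℤ) : ℝ) := by
            rw [hmR]
            exact div_le_div_of_nonneg_right hq1 hcpos.le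
          have h2 : cv i ≤ q i / cZ := by
            rw [hcv]; exact Int.ceil_le.mpr h1
          omega
        · have h1 : ((q i / cZ : ℤ) : ℝ) < (cv i : ℝ) + 2 * α := by
            rw [hmR]
            have h3 : (q i : ℝ) / cR ≤ (a i + wo) / cR :=
              div_le_div_of_nonneg_right hq2 hcpos.le
            have h4 : (a i + wo) / cR < a i / cR + 2 * α := by
              rw [add_div]
              have : wo / cR < 2 * α := by
                rw [div_lt_iff₀ hcpos]
                calc wo < 2 * α * 2 ^ ℓ := hwo
                  _ = 2 * α * cR := by rw [hcR]
              linarith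
            have h5 : a i / cR ≤ (cv i : ℝ) := by rw [hcv]; exact Int.le_ceil _
            linarith
          have h2 : ((q i / cZ - cv i : ℤ) : ℝ) < (K : ℝ) := by
            push_cast
            have := Int.le_ceil (2 * α)
            rw [hK]
            push_cast
            calc ((q i / cZ : ℤ) : ℝ) - (cv i : ℝ) < 2 * α := by linarith
              _ ≤ (⌈2 * α⌉ : ℝ) := Int.le_ceil _
          have : q i / cZ - cv i < K := by exact_mod_cast h2
          omega
      · funext i
        show cZ * (cv i + (q i / cZ - cv i)) = q i
        calc cZ * (cv i + (q i / cZ - cv i)) = cZ * (q i / cZ) := by ring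
          _ = q i := Int.mul_ediv_cancel' (hdvd i)
    have hTfin : T.Finite := (Fintype.piFinset _).finite_toSet
    have hfin : (lvlPts ℓ S).Finite := (hTfin.image F).subset hsub
    refine ⟨hfin, ?_⟩
    have hc1 : (lvlPts ℓ S).ncard ≤ (F '' T).ncard :=
      Set.ncard_le_ncard hsub (hTfin.image F)
    have hc2 : (F '' T).ncard ≤ T.ncard := Set.ncard_image_le hTfin
    have hc3 : T.ncard = K.toNat ^ d := by
      rw [hT, Set.ncard_coe_finset, Fintype.card_piFinset]
      simp [Int.card_Icc]
    have hKR : ((K.toNat : ℝ)) = (K : ℝ) := by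
      exact_mod_cast congrArg (fun z : ℤ => (z : ℝ)) (Int.toNat_of_nonneg hKpos.le)
    have hc4 : ((K.toNat : ℝ)) ^ d ≤ (4 * α + 1) ^ d := by
      apply pow_le_pow_left₀ (by positivity)
      rw [hKR]; exact hKle
    calc ((lvlPts ℓ S).ncard : ℝ) ≤ (K.toNat ^ d : ℕ) := by
          exact_mod_cast (hc1.trans hc2).trans_eq hc3
      _ = ((K.toNat : ℝ)) ^ d := by push_cast; ring
      _ ≤ (4 * α + 1) ^ d := hc4

/-- the level-picking algorithm maintains a valid hitting set of all
objects seen so far, and adds at most `(4α+1)^d` points per round. -/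
theorem algo_correct_and_cheap (d N : ℕ) (α : ℝ) (hα : 1 ≤ α)
    (O : ℕ → Set (Fin d → ℝ))
    (hbox : ∀ n, O n ⊆ Box d N) (hfat : ∀ n, IsFat α (O n))
    (hint : ∀ n, ∃ q : Fin d → ℤ, toRealPt q ∈ O n) :
    (∀ n m, m < n → hits (algoH O n) (O m)) ∧
    (∀ n, ((algoH O (n + 1) \ algoH O n).ncard : ℝ) ≤ (4 * α + 1) ^ d) := by
  have hmono : ∀ m n, m ≤ n → algoH O m ⊆ algoH O n := by
    intro m n hmn
    induction n with
    | zero => simp_all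
    | succ k ih =>
      rcases Nat.lt_or_ge m (k + 1) with h | h
      · exact (ih (by omega)).trans Set.subset_union_left
      · have : m = k + 1 := by omega
        subst this; rfl
  constructor
  · intro n m hmn
    have hstep : hits (algoH O (m + 1)) (O m) := by
      by_cases h : hits (algoH O m) (O m)
      · obtain ⟨q, hq1, hq2⟩ := h
        exact ⟨q, Set.subset_union_left hq1, hq2⟩
      · obtain ⟨q, hq1, hq2⟩ := objLevel_attained (hbox m) (hint m)
        exact ⟨q, Set.mem_union_right _ ⟨h, hq1, hq2⟩, hq1⟩
    obtain ⟨q, hq1, hq2⟩ := hstep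
    exact ⟨q, hmono (m + 1) n hmn hq1, hq2⟩
  · intro n
    obtain ⟨hfin, hcard⟩ :=
      lvlPts_finite_and_card hα (hbox n) (hfat n) (hint n)
    have hsub : algoH O (n + 1) \ algoH O n ⊆ lvlPts (objLevel (O n)) (O n) := by
      intro q hq
      rcases hq.1 with h | h
      · exact absurd h hq.2
      · exact h.2
    have h1 : (algoH O (n + 1) \ algoH O n).ncard ≤ (lvlPts (objLevel (O n)) (O n)).ncard :=
      Set.ncard_le_ncard hsub hfin
    calc ((algoH O (n + 1) \ algoH O n).ncard : ℝ)
        ≤ ((lvlPts (objLevel (O n)) (O n)).ncard : ℝ) := by exact_mod_cast h1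
      _ ≤ (4 * α + 1) ^ d := hcard
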